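/- Let S be an 𝔽_q-subspace of 𝔽_{q^n} with dim_{𝔽_q}(S) = k ≥ 2, let μ ∈ 𝔽_{q^n} ∖ 𝔽_q, and let t = dim_{𝔽_q}(𝔽_q(μ)). Suppose dim_{𝔽_q}(S ∩ μS) = k−1 and t ≥ k. Then t ≠ k (so t > k) and there exists b ∈ 𝔽_{q^n} ∖ {0} such that S = b·⟨1, μ, …, μ^{k−1}⟩_{𝔽_q}. -/

import Mathlib

open Submodule

/-- The span `⟨1, μ, …, μ^{m-1}⟩_{F_q}`. -/
noncomputable def pows (Fq : Type*) {Fqn : Type*} [Field Fq] [Field Fqn] [Algebra Fq Fqn]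
    (μ : Fqn) (m : ℕ) : Submodule Fq Fqn :=
  Submodule.span Fq (Set.range fun i : Fin m => μ ^ (i : ℕ))

/-- Multiplication of a subspace by a scalar: `b · W`. -/
noncomputable def bmul (Fq : Type*) {Fqn : Type*} [Field Fq] [Field Fqn] [Algebra Fq Fqn]
    (b : Fqn) (W : Submodule Fq Fqn) : Submodule Fq Fqn :=
  W.map (LinearMap.mulLeft Fq b)

section Aux

variable (Fq : Type*) {Fqn : Type*} [Field Fq] [Field Fqn] [Algebra Fq Fqn]

lemma bmul_finrank (b : Fqn) (hb : b ≠ 0) (W : Submodule Fq Fqn) :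
    Module.finrank Fq (bmul Fq b W) = Module.finrank Fq W :=
  ((Submodule.equivMapOfInjective _ (fun x y h => mul_left_cancel₀ hb h) W).finrank_eq).symm

lemma bmul_fd (b : Fqn) (W : Submodule Fq Fqn) [FiniteDimensional Fq W] :
    FiniteDimensional Fq (bmul Fq b W) :=
  Module.Finite.map W _

lemma bmul_one (W : Submodule Fq Fqn) : bmul Fq 1 W = W := by
  simp [bmul, LinearMap.mulLeft_one]

lemma bmul_bmul (a b : Fqn) (W : Submodule Fq Fqn) :
    bmul Fq a (bmul Fq b W) = bmul Fq (a * b) W := by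
  simp [bmul, LinearMap.mulLeft_mul, Submodule.map_comp]

lemma bmul_mono (b : Fqn) {W W' : Submodule Fq Fqn} (h : W ≤ W') :
    bmul Fq b W ≤ bmul Fq b W' := Submodule.map_mono h

lemma mem_bmul_iff (b : Fqn) (W : Submodule Fq Fqn) (x : Fqn) :
    x ∈ bmul Fq b W ↔ ∃ y ∈ W, b * y = x := by
  simp [bmul]

/-- The key dimension inequality: for `A ≤ B`, codim of `A ⊓ C` in `A` is at most
codim of `B ⊓ C` in `B`. -/
lemma finrank_inf_ineq {A B C : Submodule Fq Fqn} (hAB : A ≤ B)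
    [FiniteDimensional Fq B] [FiniteDimensional Fq C] :
    Module.finrank Fq A + Module.finrank Fq ↥(B ⊓ C) ≤
      Module.finrank Fq ↥(A ⊓ C) + Module.finrank Fq B := by
  haveI : FiniteDimensional Fq A := Submodule.finiteDimensional_of_le hAB
  have h1 := Submodule.finrank_sup_add_finrank_inf_eq A C
  have h2 := Submodule.finrank_sup_add_finrank_inf_eq B C
  have h3 : Module.finrank Fq ↥(A ⊔ C) ≤ Module.finrank Fq ↥(B ⊔ C) :=
    Submodule.finrank_mono (sup_le_sup_right hAB C)
  omega

/-- The chain `T i = S ⊓ μS ⊓ … ⊓ μ^i S`. -/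
noncomputable def chainT (S : Submodule Fq Fqn) (μ : Fqn) : ℕ → Submodule Fq Fqn
  | 0 => S
  | i + 1 => S ⊓ bmul Fq μ (chainT S μ i)

end Aux

/-- Let `S` be a `k`-dimensional `F_q`-subspace of `F_{q^n}`, `k ≥ 2`,
`μ ∈ F_{q^n} \ F_q`, `t = dim_{F_q} F_q(μ)`. If `dim_{F_q}(S ∩ μS) = k - 1` and `t ≥ k`,
then `t ≠ k` and `S = b·⟨1, μ, …, μ^{k-1}⟩_{F_q}` for some nonzero `b`. -/
theorem stmt2 (Fq Fqn : Type*) [Field Fq] [Field Fqn] [Algebra Fq Fqn] [Fintype Fq]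
    (q n : ℕ) (hq : Fintype.card Fq = q) (hn : Module.finrank Fq Fqn = n)
    (S : Submodule Fq Fqn) (k : ℕ) (hk : Module.finrank Fq ↥S = k) (hk2 : 2 ≤ k)
    (μ : Fqn) (hμ : μ ∉ Set.range (algebraMap Fq Fqn))
    (t : ℕ) (ht : Module.finrank Fq ↥(Algebra.adjoin Fq {μ}) = t)
    (hdim : Module.finrank Fq ↥(S ⊓ bmul Fq μ S) = k - 1) (htk : k ≤ t) :
    t ≠ k ∧ ∃ b : Fqn, b ≠ 0 ∧ S = bmul Fq b (pows Fq μ k) := by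
  haveI hSfd : FiniteDimensional Fq S := FiniteDimensional.of_finrank_pos (by omega)
  have hμ0 : μ ≠ 0 := by
    rintro rfl
    exact hμ ⟨0, by simp⟩
  -- integrality and degree of μ
  haveI hadjfd : FiniteDimensional Fq ↥(Algebra.adjoin Fq {μ}) :=
    FiniteDimensional.of_finrank_pos (by omega)
  have hint : IsIntegral Fq μ :=
    IsIntegral.of_mem_of_fg (Algebra.adjoin Fq {μ}) (Module.Finite.iff_fg.mp hadjfd) μ
      (Algebra.self_mem_adjoin_singleton Fq μ)
  have hdeg : (minpoly Fq μ).natDegree = t := by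
    have := (Algebra.adjoin.powerBasis hint).finrank
    simpa [ht] using this.symm
  -- linear independence of 1, μ, ..., μ^(k-1)
  have hli : LinearIndependent Fq fun i : Fin k => μ ^ (i : ℕ) := by
    have h := linearIndependent_pow (K := Fq) μ
    have := h.comp (Fin.castLE (show k ≤ (minpoly Fq μ).natDegree by omega))
      (Fin.castLE_injective _)
    exact this
  have hpowrank : Module.finrank Fq (pows Fq μ k) = k := by
    rw [pows, finrank_span_eq_card hli, Fintype.card_fin]
  -- the chain T i = S ⊓ μS ⊓ ... ⊓ μ^i S
  set T : ℕ → Submodule Fq Fqn := chainT Fq S μ with hTdef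
  have hT0 : T 0 = S := rfl
  have hTsucc : ∀ i, T (i + 1) = S ⊓ bmul Fq μ (T i) := fun _ => rfl
  have hTle : ∀ i, T i ≤ S := by
    intro i; cases i with
    | zero => exact le_rfl
    | succ i => exact inf_le_left
  have hTfd : ∀ i, FiniteDimensional Fq ↥(T i) := by
    intro i
    exact Submodule.finiteDimensional_of_le (hTle i)
  haveI hμSfd : FiniteDimensional Fq (bmul Fq μ S) := bmul_fd Fq μ S
  have hμSrank : Module.finrank Fq (bmul Fq μ S) = k := by rw [bmul_finrank Fq μ hμ0, hk]
  have hTrank : ∀ i, k ≤ Module.finrank Fq (T i) + i := by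
    intro i; induction i with
    | zero => rw [hT0, hk]; omega
    | succ i ih =>
      haveI := hTfd i
      have hAB : bmul Fq μ (T i) ≤ bmul Fq μ S := bmul_mono Fq μ (hTle i)
      have key := finrank_inf_ineq Fq (C := S) hAB
      have hBC : Module.finrank Fq ↥(bmul Fq μ S ⊓ S) = k - 1 := by
        rw [inf_comm]; exact hdim
      have hA : Module.finrank Fq ↥(bmul Fq μ (T i)) = Module.finrank Fq (T i) :=
        bmul_finrank Fq μ hμ0 (T i)
      have hAC : Module.finrank Fq ↥(bmul Fq μ (T i) ⊓ S) = Module.finrank Fq (T (i + 1)) := by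
        rw [hTsucc i, inf_comm]
      rw [hBC, hA, hAC, hμSrank] at key
      omega
  have hTsub : ∀ i j, j ≤ i → T i ≤ bmul Fq (μ ^ j) S := by
    intro i; induction i with
    | zero =>
      intro j hj
      interval_cases j
      rw [pow_zero, bmul_one]
      exact hT0.le
    | succ i ih =>
      intro j hj
      cases j with
      | zero => rw [pow_zero, bmul_one]; exact hTle _
      | succ j =>
        calc T (i + 1) ≤ bmul Fq μ (T i) := (hTsucc i) ▸ inf_le_right
          _ ≤ bmul Fq μ (bmul Fq (μ ^ j) S) := bmul_mono Fq μ (ih j (by omega))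
          _ = bmul Fq (μ ^ (j + 1)) S := by rw [bmul_bmul, ← pow_succ']
  -- pick a nonzero element of T (k-1)
  haveI := hTfd (k - 1)
  have hTne : T (k - 1) ≠ ⊥ := by
    intro h
    have := hTrank (k - 1)
    rw [h, finrank_bot] at this
    omega
  obtain ⟨c, hc, hc0⟩ := Submodule.exists_mem_ne_zero_of_ne_bot hTne
  -- c = μ^(k-1) * b with b ∈ S
  obtain ⟨b, hbS, hbc⟩ := (mem_bmul_iff Fq _ S c).mp (hTsub (k - 1) (k - 1) le_rfl hc)
  have hb0 : b ≠ 0 := by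
    rintro rfl
    simp at hbc
    exact hc0 hbc.symm
  -- each b * μ^j ∈ S
  have hbpow : ∀ j, j < k → b * μ ^ j ∈ S := by
    intro j hj
    obtain ⟨s, hsS, hsc⟩ := (mem_bmul_iff Fq _ S c).mp
      (hTsub (k - 1) (k - 1 - j) (by omega) hc)
    have : μ ^ (k - 1 - j) * (b * μ ^ j) = μ ^ (k - 1 - j) * s := by
      rw [hsc, ← hbc]
      have : μ ^ (k - 1 - j) * μ ^ j = μ ^ (k - 1) := by
        rw [← pow_add]; congr 1; omega
      calc μ ^ (k - 1 - j) * (b * μ ^ j) = (μ ^ (k - 1 - j) * μ ^ j) * b := by ring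
        _ = μ ^ (k - 1) * b := by rw [this]
    have hbs : b * μ ^ j = s := by
      have hne : (μ : Fqn) ^ (k - 1 - j) ≠ 0 := pow_ne_zero _ hμ0
      exact mul_left_cancel₀ hne this
    rw [hbs]; exact hsS
  -- S = b · pows
  have hle : bmul Fq b (pows Fq μ k) ≤ S := by
    rw [bmul, pows, Submodule.map_span, Submodule.span_le]
    rintro x ⟨y, ⟨i, rfl⟩, rfl⟩
    exact hbpow i i.isLt
  have hSeq : S = bmul Fq b (pows Fq μ k) := by
    refine (Submodule.eq_of_le_of_finrank_le hle ?_).symm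
    rw [hk, bmul_finrank Fq b hb0, hpowrank]
  refine ⟨?_, b, hb0, hSeq⟩
  -- t ≠ k
  intro htk'
  set A : Submodule Fq Fqn := Subalgebra.toSubmodule (Algebra.adjoin Fq {μ}) with hA
  haveI : FiniteDimensional Fq A := hadjfd
  have hArank : Module.finrank Fq A = t := ht
  have hpowsA : pows Fq μ k ≤ A := by
    rw [pows, Submodule.span_le]
    rintro x ⟨i, rfl⟩
    exact Subalgebra.pow_mem _ (Algebra.self_mem_adjoin_singleton Fq μ) _
  have hpowsEq : pows Fq μ k = A :=
    Submodule.eq_of_le_of_finrank_le hpowsA (by rw [hArank, hpowrank, htk'])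
  have hμA : bmul Fq μ A ≤ A := by
    rintro x hx
    obtain ⟨y, hy, rfl⟩ := (mem_bmul_iff Fq μ A x).mp hx
    exact Subalgebra.mul_mem _ (Algebra.self_mem_adjoin_singleton Fq μ) hy
  have hμAeq : bmul Fq μ A = A :=
    Submodule.eq_of_le_of_finrank_le hμA (by rw [bmul_finrank Fq μ hμ0 A])
  have hμS : bmul Fq μ S = S := by
    rw [hSeq, hpowsEq, bmul_bmul, mul_comm, ← bmul_bmul, hμAeq]
  rw [hμS, inf_idem, hk] at hdim
  omega
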